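/- Let p be a complex polynomial of degree d ≥ 2 with p(0) = 0 and |p'(0)| < 1, and let L be the sum of the absolute values of the coefficients of p. Define r = (1 − |p'(0)|)/(L − |p'(0)|) if L ≥ 1, and r = ((1 − |p'(0)|)/(L − |p'(0)|))^{1/(d−1)} (positive real (d−1)-th root) if L < 1. Then |p(z)| < |z| for every z ∈ ℂ with 0 < |z| < r. -/

import Mathlib

open Polynomial

/-- For a polynomial `p` of degree `d ≥ 2` with `p(0) = 0` and `|p'(0)| < 1`, with `L` the sum
of the absolute values of the coefficients of `p` and `r` defined as in Lemma 5.1 of the paper,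
one has `|p(z)| < |z|` for every `z` with `0 < |z| < r`. -/
theorem abs_eval_lt_of_lt_radius
    (p : ℂ[X]) (d : ℕ) (hd : 2 ≤ d) (hdeg : p.natDegree = d)
    (h0 : p.eval 0 = 0) (hmul : ‖p.derivative.eval 0‖ < 1)
    (L : ℝ) (hL : L = ∑ i ∈ Finset.range (d + 1), ‖p.coeff i‖)
    (r : ℝ)
    (hr : r = if 1 ≤ L then
        (1 - ‖p.derivative.eval 0‖) / (L - ‖p.derivative.eval 0‖)
      else
        ((1 - ‖p.derivative.eval 0‖) / (L - ‖p.derivative.eval 0‖))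
          ^ ((1 : ℝ) / ((d : ℝ) - 1)))
    (z : ℂ) (hz0 : 0 < ‖z‖) (hzr : ‖z‖ < r) :
    ‖p.eval z‖ < ‖z‖ := by
  have hc0 : p.coeff 0 = 0 := by rwa [Polynomial.coeff_zero_eq_eval_zero]
  have hc1 : p.derivative.eval 0 = p.coeff 1 := by
    rw [← Polynomial.coeff_zero_eq_eval_zero, Polynomial.coeff_derivative]
    simp
  rw [hc1] at hmul hr
  set a := ‖p.coeff 1‖ with ha
  have ha0 : 0 ≤ a := norm_nonneg _
  have h1a : 0 < 1 - a := by linarith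
  -- the sum of absolute values of higher coefficients
  set S : ℝ := ∑ i ∈ Finset.Ico 2 (d + 1), ‖p.coeff i‖ with hS
  have hsplit : ∀ f : ℕ → ℝ, ∑ i ∈ Finset.range (d + 1), f i
      = f 0 + f 1 + ∑ i ∈ Finset.Ico 2 (d + 1), f i := by
    intro f
    rw [Finset.range_eq_Ico,
      ← Finset.sum_Ico_consecutive f (by omega : (0:ℕ) ≤ 2) (by omega : 2 ≤ d + 1)]
    have : Finset.Ico 0 2 = Finset.range 2 := by rw [Finset.range_eq_Ico]
    rw [this, Finset.sum_range_succ, Finset.sum_range_one]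
  have hLS : L = a + S := by
    rw [hL, hsplit (fun i => ‖p.coeff i‖), hc0]
    simp [ha, hS]
  -- S > 0 since leading coefficient is nonzero
  have hpne : p ≠ 0 := by
    intro h
    rw [h] at hdeg
    simp at hdeg
    omega
  have hld : ‖p.coeff d‖ ≠ 0 := by
    simp only [ne_eq, norm_eq_zero]
    rw [← hdeg]
    exact Polynomial.leadingCoeff_ne_zero.mpr hpne
  have hSpos : 0 < S := by
    have hmem : d ∈ Finset.Ico 2 (d + 1) := by simp; omega
    have := Finset.single_le_sum (f := fun i => ‖p.coeff i‖)
      (fun i _ => norm_nonneg _) hmem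
    have h2 : 0 < ‖p.coeff d‖ :=
      lt_of_le_of_ne (norm_nonneg _) (Ne.symm hld)
    linarith
  -- the key bound on |p z|
  set x := ‖z‖ with hx
  set M : ℝ := max x (x ^ (d - 1)) with hM
  have hMx : ∀ i ∈ Finset.Ico 2 (d + 1), x ^ i ≤ M * x := by
    intro i hi
    simp only [Finset.mem_Ico] at hi
    have hi1 : 1 ≤ i - 1 := by omega
    have h : x ^ i = x ^ (i - 1) * x := by
      rw [← pow_succ]
      congr 1
      omega
    rw [h]
    apply mul_le_mul_of_nonneg_right _ hz0.le
    rcases le_or_gt x 1 with hx1 | hx1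
    · calc x ^ (i - 1) ≤ x ^ 1 := pow_le_pow_of_le_one hz0.le hx1 hi1
        _ = x := pow_one x
        _ ≤ M := le_max_left _ _
    · calc x ^ (i - 1) ≤ x ^ (d - 1) := pow_le_pow_right₀ hx1.le (by omega)
        _ ≤ M := le_max_right _ _
  have hbound : ‖p.eval z‖ ≤ a * x + S * (M * x) := by
    rw [Polynomial.eval_eq_sum_range, hdeg]
    calc ‖∑ i ∈ Finset.range (d + 1), p.coeff i * z ^ i‖
        ≤ ∑ i ∈ Finset.range (d + 1), ‖p.coeff i * z ^ i‖ :=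
          norm_sum_le _ _
      _ = ∑ i ∈ Finset.range (d + 1), ‖p.coeff i‖ * x ^ i := by
          simp [norm_mul, norm_pow, hx]
      _ = a * x + ∑ i ∈ Finset.Ico 2 (d + 1), ‖p.coeff i‖ * x ^ i := by
          rw [hsplit (fun i => ‖p.coeff i‖ * x ^ i), hc0]
          simp [pow_one, ha]
      _ ≤ a * x + ∑ i ∈ Finset.Ico 2 (d + 1), ‖p.coeff i‖ * (M * x) := by
          apply add_le_add le_rfl
          apply Finset.sum_le_sum
          intro i hi
          exact mul_le_mul_of_nonneg_left (hMx i hi) (norm_nonneg _)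
      _ = a * x + S * (M * x) := by rw [← Finset.sum_mul]
  -- it suffices to show S * M < 1 - a
  have key : S * M < 1 - a := by
    rcases le_or_gt 1 L with hL1 | hL1
    · -- case L ≥ 1 : r = (1-a)/S ≤ 1
      rw [if_pos hL1, hLS] at hr
      have hrS : r = (1 - a) / S := by rw [hr]; ring_nf
      have hr1 : r ≤ 1 := by
        rw [hrS, div_le_one hSpos]
        linarith
      have hx1 : x < 1 := lt_of_lt_of_le hzr hr1
      have hMeq : M ≤ x := by
        apply max_le le_rfl
        calc x ^ (d - 1) ≤ x ^ 1 := pow_le_pow_of_le_one hz0.le hx1.le (by omega)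
          _ = x := pow_one x
      calc S * M ≤ S * x := mul_le_mul_of_nonneg_left hMeq hSpos.le
        _ < S * r := by apply mul_lt_mul_of_pos_left hzr hSpos
        _ = 1 - a := by rw [hrS]; field_simp
    · -- case L < 1
      rw [if_neg (not_le.mpr hL1), hLS] at hr
      have hSa : a + S - a = S := by ring
      rw [hSa] at hr
      set c : ℝ := (1 - a) / S with hc
      have hcpos : 0 < c := div_pos h1a hSpos
      rcases le_or_gt x 1 with hx1 | hx1
      · have hMle : M ≤ 1 := by
          apply max_le hx1
          exact pow_le_one₀ hz0.le hx1
        calc S * M ≤ S * 1 := mul_le_mul_of_nonneg_left hMle hSpos.le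
          _ = S := mul_one S
          _ < 1 - a := by linarith [hLS ▸ hL1]
      · -- |z| > 1, so M = x^(d-1) < r^(d-1) = c
        have hdr : ((d : ℝ) - 1) ≠ 0 := by
          have : (2 : ℝ) ≤ (d : ℝ) := by exact_mod_cast hd
          linarith
        have hrpow : r ^ (d - 1) = c := by
          rw [hr, ← Real.rpow_natCast (c ^ ((1:ℝ) / ((d:ℝ) - 1))) (d - 1),
            ← Real.rpow_mul hcpos.le]
          have hcast : ((d - 1 : ℕ) : ℝ) = (d : ℝ) - 1 := by
            push_cast [Nat.cast_sub (by omega : 1 ≤ d)]; ring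
          rw [hcast, one_div_mul_cancel hdr, Real.rpow_one]
        have hMeq : M = x ^ (d - 1) := by
          apply max_eq_right
          calc x = x ^ 1 := (pow_one x).symm
            _ ≤ x ^ (d - 1) := pow_le_pow_right₀ hx1.le (by omega)
        have hxr : x ^ (d - 1) < r ^ (d - 1) := by
          apply pow_lt_pow_left₀ hzr hz0.le
          omega
        have : S * M < S * c := by
          rw [hMeq]
          apply mul_lt_mul_of_pos_left _ hSpos
          rw [← hrpow]; exact hxr
        calc S * M < S * c := this
          _ = 1 - a := by rw [hc]; field_simp
  calc ‖p.eval z‖ ≤ a * x + S * (M * x) := hbound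
    _ = (a + S * M) * x := by ring
    _ < 1 * x := by
        apply mul_lt_mul_of_pos_right _ hz0
        linarith
    _ = x := one_mul x
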